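/- Let Q be a quiver with dimension vector α ≡ 1, and let c₁ and c₂ be two primitive cycles in Q that intersect trivially, i.e., the multiset sum of their arrows admits a unique partition into primitive cycles. Then c₁ and c₂ are either vertex-disjoint, or their common vertices and arrows form a single directed path. -/

import Mathlib

/-- A quiver (finite directed multigraph): a finite set of vertices `V`,
a finite set of arrows `A`, and source/target maps `s`, `t`. -/
structure Quiv where
  V : Type
  A : Type
  [fintV : Fintype V]
  [fintA : Fintype A]
  [decV : DecidableEq V]
  [decA : DecidableEq A]
  s : A → V
  t : A → V

attribute [instance] Quiv.fintV Quiv.fintA Quiv.decV Quiv.decA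

namespace Quiv

variable (Q : Quiv)

/-- Cyclic access to the entries of a nonempty list. -/
def cyc (l : List Q.A) (hl : l ≠ []) (i : ℕ) : Q.A :=
  l.get ⟨i % l.length, Nat.mod_lt _ (List.length_pos_iff.mpr hl)⟩

/-- `l` is a (nonempty) directed cycle: consecutive arrows compose, cyclically. -/
def IsCycleList (l : List Q.A) : Prop :=
  ∃ hl : l ≠ [], ∀ i : ℕ, Q.t (Q.cyc l hl i) = Q.s (Q.cyc l hl (i + 1))

/-- A primitive (simple) cycle: a directed cycle visiting no vertex more than once. -/
def IsPrimCycle (l : List Q.A) : Prop :=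
  Q.IsCycleList l ∧ (l.map Q.s).Nodup

/-- The set of primitive cycles of `Q`, each recorded by its (finite) set of arrows.
A primitive cycle is determined, up to rotation, by its set of arrows. -/
def primCycles : Set (Finset Q.A) :=
  { S | ∃ l : List Q.A, Q.IsPrimCycle l ∧ l.toFinset = S }

/-- The number of primitive cycles of `Q`. -/
noncomputable def numPrimCycles : ℕ := Q.primCycles.ncard

/-- One-step reachability. -/
def Step (u v : Q.V) : Prop := ∃ a : Q.A, Q.s a = u ∧ Q.t a = v

/-- `Q` is strongly connected: every vertex is reachable from every other
by a directed path. -/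
def StronglyConnected : Prop := ∀ u v : Q.V, Relation.ReflTransGen Q.Step u v

/-- `Q` has no loops. -/
def NoLoops : Prop := ∀ a : Q.A, Q.s a ≠ Q.t a

/-- In-degree of a vertex (arrows counted with multiplicity). -/
def inDeg (v : Q.V) : ℕ := (Finset.univ.filter fun a => Q.t a = v).card

/-- Out-degree of a vertex (arrows counted with multiplicity). -/
def outDeg (v : Q.V) : ℕ := (Finset.univ.filter fun a => Q.s a = v).card

/-- `F(Q) = |C| + |V| - |A| - 1`, the codimension of the associated toric variety. -/
noncomputable def F : ℤ :=
  (Q.numPrimCycles : ℤ) + (Fintype.card Q.V : ℤ) - (Fintype.card Q.A : ℤ) - 1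


/-- A multiset of arrows is Eulerian if at every vertex the number of arrows of `U`
entering the vertex (with multiplicity) equals the number leaving it. -/
def Eulerian (U : Multiset Q.A) : Prop :=
  ∀ v : Q.V, (U.filter fun a => Q.t a = v).card = (U.filter fun a => Q.s a = v).card

/-- `P` is a partition of the arrow multiset `U` into primitive cycles: a multiset of
arrow sets of primitive cycles whose multiset sum is `U`. -/
def IsCyclePartition (U : Multiset Q.A) (P : Multiset (Finset Q.A)) : Prop :=
  (∀ c ∈ P, c ∈ Q.primCycles) ∧ (P.map Finset.val).sum = U

/-- The set of vertices met by a set of arrows. -/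
def verts (S : Finset Q.A) : Finset Q.V := S.image Q.s ∪ S.image Q.t

/-- The list of vertices visited by a list of arrows (for a composable list:
the source of the first arrow followed by the targets of all arrows). -/
def pathVerts (p : List Q.A) : List Q.V :=
  match p with
  | [] => []
  | a :: _ => Q.s a :: p.map Q.t

/-- `p` is a simple directed path: consecutive arrows compose and it visits no
vertex twice. -/
def IsDirPath (p : List Q.A) : Prop :=
  p.Chain' (fun a b => Q.t a = Q.s b) ∧ (Q.pathVerts p).Nodup

/-- `p` is a (nonempty) simple directed path from `u` to `w`. -/
def IsPathFromTo (p : List Q.A) (u w : Q.V) : Prop :=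
  Q.IsDirPath p ∧ p ≠ [] ∧ (Q.pathVerts p).head? = some u ∧ (Q.pathVerts p).getLast? = some w

variable {Q}

lemma chain'_iff_get' {α : Type*} {R : α → α → Prop} {l : List α} :
    l.Chain' R ↔ ∀ (i : ℕ) (h : i < l.length - 1),
      R (l.get ⟨i, by omega⟩) (l.get ⟨i + 1, by omega⟩) := by
  unfold List.Chain'
  rw [List.isChain_iff_getElem]
  constructor
  · intro h i hi
    exact h i (by omega)
  · intro h i hi
    exact h i (by omega)

lemma getLast_eq_get' {α : Type*} (l : List α) (h : l ≠ []) :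
    l.getLast h = l.get ⟨l.length - 1, by
      have := List.length_pos_iff.mpr h; omega⟩ := by
  simp [List.getLast_eq_getElem]

lemma get_map' {α β : Type*} (f : α → β) {l : List α} {n : Fin (l.map f).length} :
    (l.map f).get n = f (l.get ⟨n, by simpa using n.2⟩) := by
  simp

lemma chain'_append' {α : Type*} {R : α → α → Prop} {l₁ l₂ : List α} :
    (l₁ ++ l₂).Chain' R ↔ l₁.Chain' R ∧ l₂.Chain' R ∧
      ∀ x ∈ l₁.getLast?, ∀ y ∈ l₂.head?, R x y :=
  List.isChain_append

lemma getLast_append'' {α : Type*} (l₁ l₂ : List α) (h : l₂ ≠ []) :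
    (l₁ ++ l₂).getLast (by simp [h]) = l₂.getLast h :=
  List.getLast_append_of_ne_nil _ h

lemma cyc_congr {l : List Q.A} (hl : l ≠ []) {i j : ℕ}
    (h : i % l.length = j % l.length) : Q.cyc l hl i = Q.cyc l hl j := by
  simp only [cyc, h]

lemma cyc_lt {l : List Q.A} (hl : l ≠ []) {i : ℕ} (h : i < l.length) :
    Q.cyc l hl i = l.get ⟨i, h⟩ := by
  simp only [cyc]
  congr 1
  exact Fin.ext (Nat.mod_eq_of_lt h)

/-- chain' characterization of cycle lists -/
lemma isCycleList_iff {l : List Q.A} (hl : l ≠ []) :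
    Q.IsCycleList l ↔
      (l.Chain' (fun a b => Q.t a = Q.s b) ∧ Q.t (l.getLast hl) = Q.s (l.head hl)) := by
  have hlen : 0 < l.length := List.length_pos_iff.mpr hl
  constructor
  · rintro ⟨hl', hc⟩
    constructor
    · rw [chain'_iff_get']
      intro i hi
      have := hc i
      rwa [cyc_lt hl' (by omega), cyc_lt hl' (by omega)] at this
    · have := hc (l.length - 1)
      rw [cyc_lt hl' (by omega)] at this
      have h2 : Q.cyc l hl' (l.length - 1 + 1) = l.get ⟨0, hlen⟩ := by
        have : (l.length - 1 + 1) % l.length = 0 % l.length := by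
          simp [Nat.sub_add_cancel hlen, Nat.mod_self]
        rw [cyc_congr hl' this, cyc_lt hl' hlen]
      rw [h2] at this
      rw [getLast_eq_get', ← List.get_mk_zero hlen]
      exact this
  · rintro ⟨hc, hw⟩
    refine ⟨hl, ?_⟩
    intro i
    have key : ∀ k : ℕ, k < l.length →
        Q.t (Q.cyc l hl k) = Q.s (Q.cyc l hl (k + 1)) := by
      intro k hk
      rcases Nat.lt_or_ge (k + 1) l.length with h1 | h1
      · rw [cyc_lt hl hk, cyc_lt hl h1]
        exact chain'_iff_get'.mp hc k (by omega)
      · have hk1 : k = l.length - 1 := by omega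
        have h0 : (k + 1) % l.length = 0 % l.length := by
          have : k + 1 = l.length := by omega
          simp [this, Nat.mod_self]
        rw [cyc_lt hl hk, cyc_congr hl h0, cyc_lt hl hlen]
        subst hk1
        rw [← getLast_eq_get', List.get_mk_zero hlen]
        exact hw
    have h1 : Q.cyc l hl i = Q.cyc l hl (i % l.length) :=
      cyc_congr hl (by rw [Nat.mod_mod_of_dvd _ dvd_rfl])
    have h2 : Q.cyc l hl (i + 1) = Q.cyc l hl (i % l.length + 1) := by
      apply cyc_congr hl
      conv_lhs => rw [Nat.add_mod]
      conv_rhs => rw [Nat.add_mod, Nat.mod_mod_of_dvd _ dvd_rfl]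
    rw [h1, h2]
    exact key _ (Nat.mod_lt _ hlen)

lemma IsCycleList.rotate {l : List Q.A} (h : Q.IsCycleList l) (n : ℕ) :
    Q.IsCycleList (l.rotate n) := by
  obtain ⟨hl, hc⟩ := h
  have hl' : l.rotate n ≠ [] := fun he => hl (by simpa using congrArg List.length he)
  refine ⟨hl', ?_⟩
  have hget : ∀ i : ℕ, Q.cyc (l.rotate n) hl' i = Q.cyc l hl (i + n) := by
    intro i
    have hlen : (l.rotate n).length = l.length := List.length_rotate l n
    simp only [cyc]
    rw [List.get_rotate]
    congr 1
    apply Fin.ext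
    simp only [hlen]
    conv_rhs => rw [Nat.add_mod]
    rw [Nat.add_mod (i % l.length)]
    rw [Nat.mod_mod_of_dvd _ dvd_rfl]
  intro i
  rw [hget i, hget (i + 1)]
  have : i + 1 + n = (i + n) + 1 := by omega
  rw [this]
  exact hc (i + n)


/-- take of a cycle list: chain and endpoint facts -/
lemma take_ne_nil {l : List Q.A} {m : ℕ} (hm : 0 < m) (hml : m ≤ l.length) :
    l.take m ≠ [] := by
  rw [← List.length_pos_iff]; simp; omega

lemma drop_ne_nil {l : List Q.A} {m : ℕ} (hml : m < l.length) :
    l.drop m ≠ [] := by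
  rw [← List.length_pos_iff]; simp; omega

lemma head_take {l : List Q.A} {m : ℕ} (hm : 0 < m) (hml : m ≤ l.length) :
    (l.take m).head (take_ne_nil hm hml) =
      l.head (by rw [← List.length_pos_iff]; omega) := by
  have h0 : 0 < (l.take m).length := by simp; omega
  rw [← List.get_mk_zero h0, ← List.get_mk_zero (show 0 < l.length by omega)]
  simp [List.getElem_take]

lemma getLast_take {l : List Q.A} {m : ℕ} (hm : 0 < m) (hml : m ≤ l.length) :
    (l.take m).getLast (take_ne_nil hm hml) = l.get ⟨m - 1, by omega⟩ := by
  rw [getLast_eq_get']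
  have : (l.take m).length = m := by simp; omega
  simp only [this]
  simp [List.getElem_take]

lemma head_drop {l : List Q.A} {m : ℕ} (hml : m < l.length) :
    (l.drop m).head (drop_ne_nil hml) = l.get ⟨m, hml⟩ := by
  have h0 : 0 < (l.drop m).length := by simp; omega
  rw [← List.get_mk_zero h0]
  simp [List.getElem_drop]

lemma getLast_drop' {l : List Q.A} {m : ℕ} (hml : m < l.length) :
    (l.drop m).getLast (drop_ne_nil hml) = l.getLast (by rw [← List.length_pos_iff]; omega) :=
  List.getLast_drop ..

/-- splitting a cycle list at an index where sources repeat -/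
lemma cycle_split {l : List Q.A} (h : Q.IsCycleList l) {m : ℕ} (hm : 0 < m)
    (hml : m < l.length)
    (hs : Q.s (l.get ⟨m, hml⟩) = Q.s (l.head (List.length_pos_iff.mp (by omega)))) :
    Q.IsCycleList (l.take m) ∧ Q.IsCycleList (l.drop m) := by
  have hl : l ≠ [] := List.length_pos_iff.mp (by omega)
  rw [isCycleList_iff hl] at h
  obtain ⟨hc, hw⟩ := h
  constructor
  · rw [isCycleList_iff (take_ne_nil hm (le_of_lt hml))]
    refine ⟨hc.prefix (List.take_prefix m l), ?_⟩
    rw [getLast_take hm (le_of_lt hml), head_take hm (le_of_lt hml)]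
    have hm1 : m - 1 + 1 = m := by omega
    have hchain := chain'_iff_get'.mp hc (m - 1) (by omega)
    simp only [hm1] at hchain
    rw [← hs]
    exact hchain
  · rw [isCycleList_iff (drop_ne_nil hml)]
    refine ⟨hc.suffix (List.drop_suffix m l), ?_⟩
    rw [getLast_drop' hml, head_drop hml, hs]
    exact hw

/-- arbitrary closed walks decompose into primitive cycles -/
theorem exists_cyclePartition {l : List Q.A} (h : Q.IsCycleList l) :
    ∃ P : Multiset (Finset Q.A), Q.IsCyclePartition (↑l) P := by
  generalize hn : l.length = n
  induction n using Nat.strong_induction_on generalizing l with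
  | _ n ih =>
  subst hn
  have hl : l ≠ [] := h.1
  by_cases hnd : (l.map Q.s).Nodup
  · refine ⟨{l.toFinset}, ?_, ?_⟩
    · intro c hc
      simp only [Multiset.mem_singleton] at hc
      subst hc
      exact ⟨l, ⟨h, hnd⟩, rfl⟩
    · have hnd' : l.Nodup := hnd.of_map
      simp [List.toFinset, Multiset.toFinset,
        Multiset.dedup_eq_self.mpr ((Multiset.coe_nodup).mpr hnd')]
  · -- find duplicated source
    rw [List.nodup_iff_injective_get] at hnd
    simp only [Function.Injective, not_forall] at hnd
    obtain ⟨i, j, hij, hne⟩ := hnd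
    have hlen : (l.map Q.s).length = l.length := List.length_map Q.s
    wlog hlt : (i : ℕ) < (j : ℕ) generalizing i j
    · exact this j i hij.symm (Ne.symm hne) (by
        have : (i : ℕ) ≠ (j : ℕ) := fun he => hne (Fin.ext he)
        omega)
    -- set up the rotated list
    obtain ⟨i', hi'⟩ : ∃ k : ℕ, (i : ℕ) = k := ⟨_, rfl⟩
    obtain ⟨j', hj'⟩ : ∃ k : ℕ, (j : ℕ) = k := ⟨_, rfl⟩
    rw [hi', hj'] at hlt
    have hjl : j' < l.length := by rw [← hlen, ← hj']; exact j.isLt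
    have hil : i' < l.length := by omega
    have hsij : Q.s (l.get ⟨i', hil⟩) = Q.s (l.get ⟨j', hjl⟩) := by
      have h1 := get_map' (f := Q.s) (l := l) (n := ⟨i', by omega⟩)
      have h2 := get_map' (f := Q.s) (l := l) (n := ⟨j', by omega⟩)
      rw [← h1, ← h2]
      convert hij using 2 <;> (apply Fin.ext; simp; omega)
    have hl'len : (l.rotate i').length = l.length := List.length_rotate l i'
    have hl'cyc : Q.IsCycleList (l.rotate i') := h.rotate i'
    have hl'ne : l.rotate i' ≠ [] := by
      rw [← List.length_pos_iff, hl'len]; omega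
    obtain ⟨m, hmdef⟩ : ∃ k : ℕ, j' - i' = k := ⟨_, rfl⟩
    have hm : 0 < m := by omega
    have hml : m < (l.rotate i').length := by omega
    have hget : ∀ (k : ℕ) (hk : k < (l.rotate i').length),
        (l.rotate i').get ⟨k, hk⟩ = l.get ⟨(k + i') % l.length, Nat.mod_lt _ (by omega)⟩ := by
      intro k hk
      exact List.get_rotate l i' ⟨k, hk⟩
    have hhead : (l.rotate i').head hl'ne = l.get ⟨i', hil⟩ := by
      rw [← List.get_mk_zero (by omega : 0 < (l.rotate i').length), hget 0 (by omega)]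
      congr 1
      exact Fin.ext (by simp [Nat.mod_eq_of_lt hil])
    have hgm : (l.rotate i').get ⟨m, hml⟩ = l.get ⟨j', hjl⟩ := by
      rw [hget m hml]
      congr 1
      apply Fin.ext
      show (m + i') % l.length = j'
      have : m + i' = j' := by omega
      rw [this, Nat.mod_eq_of_lt hjl]
    have hs : Q.s ((l.rotate i').get ⟨m, hml⟩) = Q.s ((l.rotate i').head hl'ne) := by
      rw [hhead, hgm, hsij]
    obtain ⟨hcyc1, hcyc2⟩ := cycle_split hl'cyc hm hml (by
      convert hs using 3)
    have hlen1 : ((l.rotate i').take m).length = m := by simp [hl'len]; omega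
    have hlen2 : ((l.rotate i').drop m).length = (l.rotate i').length - m := by simp
    obtain ⟨P₁, hP₁mem, hP₁sum⟩ := ih m (by omega) hcyc1 hlen1
    obtain ⟨P₂, hP₂mem, hP₂sum⟩ := ih ((l.rotate i').length - m) (by omega) hcyc2 hlen2
    refine ⟨P₁ + P₂, ?_, ?_⟩
    · intro c hc
      rcases Multiset.mem_add.mp hc with h | h
      exacts [hP₁mem c h, hP₂mem c h]
    · rw [Multiset.map_add, Multiset.sum_add, hP₁sum, hP₂sum]
      have : (↑((l.rotate i').take m) : Multiset Q.A) + ↑((l.rotate i').drop m) = ↑(l.rotate i') := by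
        rw [Multiset.coe_add]
        exact congrArg _ (List.take_append_drop m (l.rotate i'))
      rw [this]
      exact Multiset.coe_eq_coe.mpr (List.rotate_perm l i')

lemma toFinset_val {α : Type*} [DecidableEq α] {l : List α} (h : l.Nodup) :
    l.toFinset.val = ↑l := by
  simp [List.toFinset, Multiset.toFinset,
    Multiset.dedup_eq_self.mpr ((Multiset.coe_nodup).mpr h)]

/-- for a cycle list, the vertex set is the set of sources -/
lemma verts_toFinset {l : List Q.A} (h : Q.IsCycleList l) :
    Q.verts l.toFinset = (l.map Q.s).toFinset := by
  obtain ⟨hl, hc⟩ := h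
  ext v
  simp only [verts, Finset.mem_union, Finset.mem_image, List.mem_toFinset, List.mem_map]
  constructor
  · rintro (⟨a, ha, rfl⟩ | ⟨a, ha, rfl⟩)
    · exact ⟨a, ha, rfl⟩
    · obtain ⟨k, hk⟩ := List.mem_iff_get.mp ha
      have h1 : Q.t a = Q.t (Q.cyc l hl k) := by rw [cyc_lt hl k.isLt, hk]
      rw [h1, hc k]
      exact ⟨Q.cyc l hl (k + 1), List.get_mem _ _, rfl⟩
  · rintro ⟨a, ha, rfl⟩
    exact Or.inl ⟨a, ha, rfl⟩

/-- concatenating two composable arcs whose ends wrap around gives a cycle list -/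
lemma cycle_concat {p q : List Q.A} (hp : p ≠ []) (hq : q ≠ [])
    (hcp : p.Chain' (fun a b => Q.t a = Q.s b)) (hcq : q.Chain' (fun a b => Q.t a = Q.s b))
    (h1 : Q.t (p.getLast hp) = Q.s (q.head hq))
    (h2 : Q.t (q.getLast hq) = Q.s (p.head hp)) :
    Q.IsCycleList (p ++ q) := by
  have hne : p ++ q ≠ [] := by simp [hp]
  rw [isCycleList_iff hne]
  constructor
  · rw [chain'_append']
    refine ⟨hcp, hcq, ?_⟩
    intro x hx y hy
    rw [List.getLast?_eq_getLast hp, Option.mem_some_iff] at hx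
    rw [List.head?_eq_head hq, Option.mem_some_iff] at hy
    subst hx hy
    exact h1
  · rw [getLast_append'' p q hq, List.head_append_of_ne_nil hp]
    exact h2

lemma t_getLast_take {l : List Q.A} (h : Q.IsCycleList l) {m : ℕ} (hm : 0 < m)
    (hml : m < l.length) :
    Q.t ((l.take m).getLast (take_ne_nil hm hml.le)) = Q.s (l.get ⟨m, hml⟩) := by
  have hl : l ≠ [] := List.length_pos_iff.mp (by omega)
  rw [isCycleList_iff hl] at h
  rw [getLast_take hm hml.le]
  have hm1 : m - 1 + 1 = m := by omega
  have hchain := chain'_iff_get'.mp h.1 (m - 1) (by omega)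
  simp only [hm1] at hchain
  exact hchain

lemma t_getLast_drop {l : List Q.A} (h : Q.IsCycleList l) {m : ℕ} (hml : m < l.length) :
    Q.t ((l.drop m).getLast (drop_ne_nil hml)) =
      Q.s (l.head (List.length_pos_iff.mp (by omega))) := by
  have hl : l ≠ [] := List.length_pos_iff.mp (by omega)
  rw [isCycleList_iff hl] at h
  rw [getLast_drop' hml]
  exact h.2

/-- we can rotate a primitive cycle to start at any of its vertices -/
lemma exists_cycle_from {c : Finset Q.A} (h : c ∈ Q.primCycles) {u : Q.V}
    (hu : u ∈ Q.verts c) :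
    ∃ (l : List Q.A) (hl : l ≠ []), Q.IsPrimCycle l ∧ l.toFinset = c ∧
      Q.s (l.head hl) = u := by
  obtain ⟨l, ⟨hcyc, hnd⟩, hfin⟩ := h
  have hl : l ≠ [] := hcyc.1
  have hlen : 0 < l.length := List.length_pos_iff.mpr hl
  subst hfin
  rw [verts_toFinset hcyc, List.mem_toFinset] at hu
  obtain ⟨k, hk⟩ := List.mem_iff_get.mp hu
  have hkl : (k : ℕ) < l.length := by
    have := k.isLt; simpa using this
  refine ⟨l.rotate k, ?_, ⟨hcyc.rotate k, ?_⟩, ?_, ?_⟩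
  · rw [← List.length_pos_iff, List.length_rotate]; omega
  · rw [List.map_rotate]
    exact ((List.rotate_perm (l.map Q.s) k).nodup_iff).mpr hnd
  · exact List.toFinset_eq_of_perm _ _ (List.rotate_perm l k)
  · have hne : l.rotate (k : ℕ) ≠ [] := by
      rw [← List.length_pos_iff, List.length_rotate]; omega
    have h0 : (0 : ℕ) < (l.rotate (k : ℕ)).length := List.length_pos_iff.mpr hne
    rw [← List.get_mk_zero h0, List.get_rotate]
    have heq : ((0 : ℕ) + (k : ℕ)) % l.length = (k : ℕ) := by
      simp [Nat.mod_eq_of_lt hkl]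
    have : l.get ⟨((0:ℕ) + (k:ℕ)) % l.length, by omega⟩ = l.get ⟨(k : ℕ), hkl⟩ :=
      congrArg l.get (Fin.ext heq)
    rw [this]
    have hgm := get_map' (f := Q.s) (l := l) (n := k)
    rw [← hk, hgm]

lemma key {c₁ c₂ : Finset Q.A} (h₁ : c₁ ∈ Q.primCycles) (h₂ : c₂ ∈ Q.primCycles)
    (hdisj : Disjoint c₁ c₂)
    (htriv : ∀ P : Multiset (Finset Q.A),
      Q.IsCyclePartition (c₁.val + c₂.val) P → P = {c₁, c₂})
    {u v : Q.V} (hu1 : u ∈ Q.verts c₁) (hu2 : u ∈ Q.verts c₂)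
    (hv1 : v ∈ Q.verts c₁) (hv2 : v ∈ Q.verts c₂) (huv : u ≠ v) : False := by
  obtain ⟨l₁, hl₁ne, ⟨hcyc₁, hnd₁⟩, hfin₁, hhead₁⟩ := exists_cycle_from h₁ hu1
  obtain ⟨l₂, hl₂ne, ⟨hcyc₂, hnd₂⟩, hfin₂, hhead₂⟩ := exists_cycle_from h₂ hv2
  -- index of v in l₁
  have hv1' : v ∈ (l₁.map Q.s).toFinset := by
    rw [← verts_toFinset hcyc₁, hfin₁]; exact hv1
  obtain ⟨k₁f, hk₁⟩ := List.mem_iff_get.mp (List.mem_toFinset.mp hv1')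
  have hk₁l : (k₁f : ℕ) < l₁.length := by simpa using k₁f.isLt
  have hsk₁ : Q.s (l₁.get ⟨k₁f, hk₁l⟩) = v := by rw [← hk₁, get_map']
  have hk₁0 : 0 < (k₁f : ℕ) := by
    rcases Nat.eq_zero_or_pos (k₁f : ℕ) with h0 | h0
    · exfalso
      apply huv
      rw [← hhead₁, ← hsk₁]
      congr 1
      rw [← List.get_mk_zero (List.length_pos_iff.mpr hl₁ne)]
      exact congrArg l₁.get (Fin.ext (by simp; omega))
    · exact h0
  -- index of u in l₂
  have hu2' : u ∈ (l₂.map Q.s).toFinset := by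
    rw [← verts_toFinset hcyc₂, hfin₂]; exact hu2
  obtain ⟨k₂f, hk₂⟩ := List.mem_iff_get.mp (List.mem_toFinset.mp hu2')
  have hk₂l : (k₂f : ℕ) < l₂.length := by simpa using k₂f.isLt
  have hsk₂ : Q.s (l₂.get ⟨k₂f, hk₂l⟩) = u := by rw [← hk₂, get_map']
  have hk₂0 : 0 < (k₂f : ℕ) := by
    rcases Nat.eq_zero_or_pos (k₂f : ℕ) with h0 | h0
    · exfalso
      apply huv
      rw [← hhead₂, ← hsk₂]
      congr 1
      rw [← List.get_mk_zero (List.length_pos_iff.mpr hl₂ne)]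
      exact congrArg l₂.get (Fin.ext (by simp; omega))
    · exact h0
  have hch₁ : l₁.Chain' (fun a b => Q.t a = Q.s b) := ((isCycleList_iff hl₁ne).mp hcyc₁).1
  have hch₂ : l₂.Chain' (fun a b => Q.t a = Q.s b) := ((isCycleList_iff hl₂ne).mp hcyc₂).1
  -- the two recombined closed walks
  have hwcyc : Q.IsCycleList (l₁.take k₁f ++ l₂.take k₂f) := by
    apply cycle_concat (take_ne_nil hk₁0 hk₁l.le) (take_ne_nil hk₂0 hk₂l.le)
      (hch₁.prefix (List.take_prefix _ _)) (hch₂.prefix (List.take_prefix _ _))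
    · rw [t_getLast_take hcyc₁ hk₁0 hk₁l, head_take hk₂0 hk₂l.le, hsk₁, hhead₂]
    · rw [t_getLast_take hcyc₂ hk₂0 hk₂l, head_take hk₁0 hk₁l.le, hsk₂, hhead₁]
  have hw'cyc : Q.IsCycleList (l₁.drop k₁f ++ l₂.drop k₂f) := by
    apply cycle_concat (drop_ne_nil hk₁l) (drop_ne_nil hk₂l)
      (hch₁.suffix (List.drop_suffix _ _)) (hch₂.suffix (List.drop_suffix _ _))
    · rw [t_getLast_drop hcyc₁ hk₁l, head_drop hk₂l, hhead₁, hsk₂]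
    · rw [t_getLast_drop hcyc₂ hk₂l, head_drop hk₁l, hhead₂, hsk₁]
  obtain ⟨P₁, hP₁mem, hP₁sum⟩ := exists_cyclePartition hwcyc
  obtain ⟨P₂, hP₂mem, hP₂sum⟩ := exists_cyclePartition hw'cyc
  have hval₁ : c₁.val = ↑l₁ := by rw [← hfin₁]; exact toFinset_val hnd₁.of_map
  have hval₂ : c₂.val = ↑l₂ := by rw [← hfin₂]; exact toFinset_val hnd₂.of_map
  have hpart : Q.IsCyclePartition (c₁.val + c₂.val) (P₁ + P₂) := by
    constructor
    · intro c hc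
      rcases Multiset.mem_add.mp hc with h | h
      exacts [hP₁mem c h, hP₂mem c h]
    · rw [Multiset.map_add, Multiset.sum_add, hP₁sum, hP₂sum]
      rw [← Multiset.coe_add, ← Multiset.coe_add]
      have e₁ : (↑(l₁.take k₁f) : Multiset Q.A) + ↑(l₁.drop k₁f) = ↑l₁ := by
        rw [Multiset.coe_add]
        exact congrArg _ (List.take_append_drop _ _)
      have e₂ : (↑(l₂.take k₂f) : Multiset Q.A) + ↑(l₂.drop k₂f) = ↑l₂ := by
        rw [Multiset.coe_add]
        exact congrArg _ (List.take_append_drop _ _)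
      rw [hval₁, hval₂, ← e₁, ← e₂]
      exact add_add_add_comm _ _ _ _
  have hP := htriv _ hpart
  have hc₁mem : c₁ ∈ P₁ + P₂ := by rw [hP]; simp
  -- split nodup facts
  have hnodup₁ : l₁.Nodup := hnd₁.of_map
  have hdisj₁ : (l₁.take k₁f).Disjoint (l₁.drop k₁f) := by
    have := hnodup₁
    rw [← List.take_append_drop (k₁f : ℕ) l₁, List.nodup_append] at this
    exact fun _ h1 h2 => this.2.2 _ h1 _ h2 rfl
  rcases Multiset.mem_add.mp hc₁mem with hmem | hmem
  · -- c₁ inside the partition of w : misses the arrow at position k₁f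
    have hle : c₁.val ≤ (Multiset.map Finset.val P₁).sum :=
      Multiset.single_le_sum (fun _ _ => Multiset.zero_le _) _
        (Multiset.mem_map_of_mem _ hmem)
    rw [hP₁sum] at hle
    have ha₁ : l₁.get ⟨k₁f, hk₁l⟩ ∈ c₁.val := by
      rw [hval₁]
      exact Multiset.mem_coe.mpr (List.get_mem _ _)
    have haw := Multiset.mem_of_le hle ha₁
    rw [Multiset.mem_coe, List.mem_append] at haw
    rcases haw with h | h
    · have hadrop : l₁.get ⟨k₁f, hk₁l⟩ ∈ l₁.drop k₁f := by
        rw [← head_drop hk₁l]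
        exact List.head_mem _
      exact hdisj₁ h hadrop
    · have hc2 : l₁.get ⟨k₁f, hk₁l⟩ ∈ c₂ := by
        rw [← hfin₂, List.mem_toFinset]
        exact List.take_subset _ _ h
      have hc1 : l₁.get ⟨k₁f, hk₁l⟩ ∈ c₁ := by
        rw [← hfin₁, List.mem_toFinset]
        exact List.get_mem _ _
      exact Finset.disjoint_left.mp hdisj hc1 hc2
  · -- c₁ inside the partition of w' : misses the head arrow of l₁
    have hle : c₁.val ≤ (Multiset.map Finset.val P₂).sum :=
      Multiset.single_le_sum (fun _ _ => Multiset.zero_le _) _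
        (Multiset.mem_map_of_mem _ hmem)
    rw [hP₂sum] at hle
    have ha₁ : l₁.head hl₁ne ∈ c₁.val := by
      rw [hval₁]
      exact Multiset.mem_coe.mpr (List.head_mem _)
    have haw := Multiset.mem_of_le hle ha₁
    rw [Multiset.mem_coe, List.mem_append] at haw
    rcases haw with h | h
    · have hatake : l₁.head hl₁ne ∈ l₁.take k₁f := by
        rw [← head_take hk₁0 hk₁l.le]
        exact List.head_mem _
      exact hdisj₁ hatake h
    · have hc2 : l₁.head hl₁ne ∈ c₂ := by
        rw [← hfin₂, List.mem_toFinset]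
        exact List.drop_subset _ _ h
      have hc1 : l₁.head hl₁ne ∈ c₁ := by
        rw [← hfin₁, List.mem_toFinset]
        exact List.head_mem _
      exact Finset.disjoint_left.mp hdisj hc1 hc2

/-- if two (arrow-disjoint, distinct) primitive cycles intersect
trivially, i.e. the multiset sum of their arrows admits a unique partition into
primitive cycles, then they are vertex-disjoint, or they meet in a single vertex,
or their common vertices and arrows form a single directed path. -/
theorem stmt_6 (Q : Quiv) (c₁ c₂ : Finset Q.A)
    (h₁ : c₁ ∈ Q.primCycles) (h₂ : c₂ ∈ Q.primCycles)
    (hne : c₁ ≠ c₂) (hdisj : Disjoint c₁ c₂)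
    (htriv : ∀ P : Multiset (Finset Q.A),
      Q.IsCyclePartition (c₁.val + c₂.val) P → P = {c₁, c₂}) :
    Disjoint (Q.verts c₁) (Q.verts c₂) ∨
    (c₁ ∩ c₂ = ∅ ∧ ∃ v : Q.V, Q.verts c₁ ∩ Q.verts c₂ = {v}) ∨
    (∃ p : List Q.A, p ≠ [] ∧ Q.IsDirPath p ∧ p.toFinset = c₁ ∩ c₂ ∧
      (Q.pathVerts p).toFinset = Q.verts c₁ ∩ Q.verts c₂) := by
  by_cases hd : Disjoint (Q.verts c₁) (Q.verts c₂)
  · exact Or.inl hd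
  right; left
  refine ⟨Finset.disjoint_iff_inter_eq_empty.mp hdisj, ?_⟩
  obtain ⟨u, hu1, hu2⟩ := Finset.not_disjoint_iff.mp hd
  refine ⟨u, ?_⟩
  ext w
  simp only [Finset.mem_inter, Finset.mem_singleton]
  constructor
  · rintro ⟨hw1, hw2⟩
    by_contra hwu
    exact key h₁ h₂ hdisj htriv hu1 hu2 hw1 hw2 (fun he => hwu he.symm)
  · rintro rfl
    exact ⟨hu1, hu2⟩


end Quiv
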